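/- Let P₀ be a probability measure supported on [−L, L] ⊂ ℝ, and for z ∈ ℝ, s > 0, define η(z) = (∫ x exp(−s(z−x)²/2) dP₀(x)) / (∫ exp(−s(z−x)²/2) dP₀(x)), the posterior mean of x given the Gaussian observation z with precision s. Then η is differentiable and η'(z) = s·Var(x | z), where Var(x | z) is the variance of the tilted measure dP₀(x)·exp(−s(z−x)²/2) normalized; consequently 0 ≤ η'(z) ≤ s·L², so η is s·L²-Lipschitz. -/

import Mathlib

open MeasureTheory

namespace Stmt10Aux

variable {P₀ : Measure ℝ} [IsProbabilityMeasure P₀] {L s : ℝ}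

lemma w_cont (s z : ℝ) : Continuous (fun x : ℝ => Real.exp (-s * (z - x) ^ 2 / 2)) := by
  fun_prop

lemma w_pos (s z x : ℝ) : 0 < Real.exp (-s * (z - x) ^ 2 / 2) := Real.exp_pos _

lemma w_le_one (hs : 0 < s) (z x : ℝ) : Real.exp (-s * (z - x) ^ 2 / 2) ≤ 1 := by
  apply Real.exp_le_one_iff.2
  have : 0 ≤ s * (z - x) ^ 2 := mul_nonneg hs.le (sq_nonneg _)
  nlinarith

/-- Integrability of `g x * w z x` for bounded `g`. -/
lemma aux_int (hs : 0 < s)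
    (hsupp : ∀ᵐ x ∂P₀, x ∈ Set.Icc (-L) L) {g : ℝ → ℝ} (hg : Continuous g) {B : ℝ}
    (hB : ∀ x ∈ Set.Icc (-L) L, |g x| ≤ B) (z : ℝ) :
    Integrable (fun x => g x * Real.exp (-s * (z - x) ^ 2 / 2)) P₀ := by
  refine (integrable_const B).mono' ((hg.mul (w_cont s z)).aestronglyMeasurable) ?_
  filter_upwards [hsupp] with x hx
  have h1 : |g x| ≤ B := hB x hx
  have h2 : Real.exp (-s * (z - x) ^ 2 / 2) ≤ 1 := w_le_one hs z x
  have h3 : 0 < Real.exp (-s * (z - x) ^ 2 / 2) := w_pos s z x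
  rw [Real.norm_eq_abs, abs_mul, abs_of_pos h3]
  nlinarith [abs_nonneg (g x)]

/-- Differentiation under the integral sign for the tilted integrals. -/
lemma aux_deriv (hs : 0 < s)
    (hsupp : ∀ᵐ x ∂P₀, x ∈ Set.Icc (-L) L) {g : ℝ → ℝ} (hg : Continuous g) {B : ℝ}
    (hB : ∀ x ∈ Set.Icc (-L) L, |g x| ≤ B) (hB0 : 0 ≤ B) (z₀ : ℝ) :
    HasDerivAt (fun z => ∫ x, g x * Real.exp (-s * (z - x) ^ 2 / 2) ∂P₀)
      (∫ x, g x * (-s * (z₀ - x)) * Real.exp (-s * (z₀ - x) ^ 2 / 2) ∂P₀) z₀ := by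
  have key := hasDerivAt_integral_of_dominated_loc_of_deriv_le (μ := P₀)
      (F := fun z x => g x * Real.exp (-s * (z - x) ^ 2 / 2))
      (F' := fun z x => g x * (-s * (z - x)) * Real.exp (-s * (z - x) ^ 2 / 2))
      (bound := fun _ => B * (s * (|z₀| + 1 + L)))
      (x₀ := z₀) (s := Metric.ball z₀ 1) (Metric.ball_mem_nhds z₀ one_pos)
      (Filter.Eventually.of_forall fun z =>
        ((hg.mul (w_cont s z)).aestronglyMeasurable))
      (aux_int hs hsupp hg hB z₀)
      (((hg.mul (by fun_prop)).mul (w_cont s z₀)).aestronglyMeasurable)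
      ?_ (integrable_const _) ?_
  · exact key.2
  · -- bound
    filter_upwards [hsupp] with x hx z hz
    have hxL : |x| ≤ L := abs_le.2 ⟨hx.1, hx.2⟩
    have hzb : |z| ≤ |z₀| + 1 := by
      have := abs_sub_abs_le_abs_sub z z₀
      have hd : |z - z₀| < 1 := by simpa [Real.dist_eq] using Metric.mem_ball.1 hz
      linarith
    have h1 : |z - x| ≤ |z₀| + 1 + L := by
      calc |z - x| ≤ |z| + |x| := abs_sub z x
        _ ≤ |z₀| + 1 + L := by linarith
    have h2 : Real.exp (-s * (z - x) ^ 2 / 2) ≤ 1 := w_le_one hs z x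
    have h3 : 0 < Real.exp (-s * (z - x) ^ 2 / 2) := w_pos s z x
    have hgx : |g x| ≤ B := hB x hx
    rw [Real.norm_eq_abs, abs_mul, abs_mul, abs_of_pos h3, abs_mul, abs_neg, abs_of_pos hs]
    have hA : 0 ≤ |z₀| + 1 + L := by
      have : (0:ℝ) ≤ L := le_trans (abs_nonneg x) hxL
      positivity
    have t1 : |g x| * (s * |z - x|) ≤ B * (s * (|z₀| + 1 + L)) :=
      mul_le_mul hgx (mul_le_mul_of_nonneg_left h1 hs.le) (by positivity) hB0
    have t0 : 0 ≤ |g x| * (s * |z - x|) := by positivity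
    calc |g x| * (s * |z - x|) * Real.exp (-s * (z - x) ^ 2 / 2)
        ≤ |g x| * (s * |z - x|) * 1 := mul_le_mul_of_nonneg_left h2 t0
      _ = |g x| * (s * |z - x|) := mul_one _
      _ ≤ B * (s * (|z₀| + 1 + L)) := t1
  · -- differentiability in z
    refine Filter.Eventually.of_forall fun x => fun z _ => ?_
    have h1 : HasDerivAt (fun z : ℝ => -s * (z - x) ^ 2 / 2) (-s * (z - x)) z := by
      have : HasDerivAt (fun z : ℝ => z - x) 1 z := (hasDerivAt_id z).sub_const x
      have := ((this.pow 2).const_mul (-s)).div_const 2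
      refine this.congr_deriv ?_
      ring
    have h2 := h1.exp
    have := h2.const_mul (g x)
    refine this.congr_deriv ?_
    ring

end Stmt10Aux

open Stmt10Aux

/-- The scalar MMSE denoiser for a compactly supported prior has derivative
`s · Var(x | z)` and is `s·L²`-Lipschitz (key estimate of Lemma A.8). -/
theorem stmt_10 (P₀ : Measure ℝ) [IsProbabilityMeasure P₀] (L s : ℝ)
    (hL : 0 ≤ L) (hs : 0 < s)
    (hsupp : ∀ᵐ x ∂P₀, x ∈ Set.Icc (-L) L)
    (η m1 m2 Var : ℝ → ℝ)
    (hη : ∀ z, η z = (∫ x, x * Real.exp (-s * (z - x) ^ 2 / 2) ∂P₀) /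
      (∫ x, Real.exp (-s * (z - x) ^ 2 / 2) ∂P₀))
    (hm1 : ∀ z, m1 z = (∫ x, x * Real.exp (-s * (z - x) ^ 2 / 2) ∂P₀) /
      (∫ x, Real.exp (-s * (z - x) ^ 2 / 2) ∂P₀))
    (hm2 : ∀ z, m2 z = (∫ x, x ^ 2 * Real.exp (-s * (z - x) ^ 2 / 2) ∂P₀) /
      (∫ x, Real.exp (-s * (z - x) ^ 2 / 2) ∂P₀))
    (hVar : ∀ z, Var z = m2 z - (m1 z) ^ 2) :
    (∀ z, HasDerivAt η (s * Var z) z) ∧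
    (∀ z, 0 ≤ s * Var z ∧ s * Var z ≤ s * L ^ 2) ∧
    LipschitzWith (s * L ^ 2).toNNReal η := by
  set w : ℝ → ℝ → ℝ := fun z x => Real.exp (-s * (z - x) ^ 2 / 2) with hw
  set D : ℝ → ℝ := fun z => ∫ x, w z x ∂P₀ with hD
  set N : ℝ → ℝ := fun z => ∫ x, x * w z x ∂P₀ with hN
  set M2 : ℝ → ℝ := fun z => ∫ x, x ^ 2 * w z x ∂P₀ with hM2
  -- basic integrability
  have hintD : ∀ z, Integrable (fun x => w z x) P₀ := fun z => by
    simpa only [one_mul] using aux_int (P₀ := P₀) hs hsupp continuous_const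
      (g := fun _ => (1:ℝ)) (B := 1) (fun x _ => by simp) z
  have hintN : ∀ z, Integrable (fun x => x * w z x) P₀ := fun z =>
    aux_int hs hsupp continuous_id (B := L) (fun x hx => abs_le.2 ⟨hx.1, hx.2⟩) z
  have hintM2 : ∀ z, Integrable (fun x => x ^ 2 * w z x) P₀ := fun z =>
    aux_int hs hsupp (by fun_prop) (B := L ^ 2) (fun x hx => by
      have := abs_le.2 ⟨hx.1, hx.2⟩
      rw [abs_of_nonneg (sq_nonneg x)]
      nlinarith [abs_nonneg x, neg_abs_le x, le_abs_self x]) z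
  -- positivity of the denominator
  have hDpos : ∀ z, 0 < D z := by
    intro z
    have hc : (0:ℝ) < Real.exp (-s * (|z| + L) ^ 2 / 2) := Real.exp_pos _
    have hmono : ∀ᵐ x ∂P₀, Real.exp (-s * (|z| + L) ^ 2 / 2) ≤ w z x := by
      filter_upwards [hsupp] with x hx
      apply Real.exp_le_exp.2
      have hxL : |x| ≤ L := abs_le.2 ⟨hx.1, hx.2⟩
      have h1 : |z - x| ≤ |z| + L := le_trans (abs_sub z x) (by linarith)
      have h2 : (z - x) ^ 2 ≤ (|z| + L) ^ 2 := by
        nlinarith [abs_nonneg (z - x), sq_abs (z - x), le_abs_self (z-x), neg_abs_le (z-x)]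
      nlinarith
    have := integral_mono_ae (integrable_const _) (hintD z) hmono
    calc (0:ℝ) < Real.exp (-s * (|z| + L) ^ 2 / 2) := hc
      _ = ∫ _, Real.exp (-s * (|z| + L) ^ 2 / 2) ∂P₀ := by simp
      _ ≤ D z := this
  -- derivatives of D and N
  have hD' : ∀ z, HasDerivAt D (-s * z * D z + s * N z) z := by
    intro z
    have h := aux_deriv (P₀ := P₀) hs hsupp continuous_const (B := 1)
      (g := fun _ => (1:ℝ)) (fun x _ => by simp) zero_le_one z
    simp only [one_mul] at h
    convert h using 1
    have : (fun x => -s * (z - x) * w z x) = fun x =>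
        (-s * z) * w z x + s * (x * w z x) := by
      funext x; ring
    have i1 : Integrable (fun x => (-s * z) * w z x) P₀ := (hintD z).const_mul _
    have i2 : Integrable (fun x => s * (x * w z x)) P₀ := (hintN z).const_mul _
    rw [this, integral_add i1 i2, integral_const_mul, integral_const_mul]
  have hN' : ∀ z, HasDerivAt N (-s * z * N z + s * M2 z) z := by
    intro z
    have h := aux_deriv (P₀ := P₀) hs hsupp continuous_id (B := L)
      (g := fun x => x) (fun x hx => abs_le.2 ⟨hx.1, hx.2⟩) hL z
    convert h using 1
    have : (fun x => x * (-s * (z - x)) * w z x) = fun x =>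
        (-s * z) * (x * w z x) + s * (x ^ 2 * w z x) := by
      funext x; ring
    have i1 : Integrable (fun x => (-s * z) * (x * w z x)) P₀ := (hintN z).const_mul _
    have i2 : Integrable (fun x => s * (x ^ 2 * w z x)) P₀ := (hintM2 z).const_mul _
    rw [this, integral_add i1 i2, integral_const_mul, integral_const_mul]
  -- variance identity: Var z = (M2 z * D z - N z ^ 2) / D z ^ 2
  have hVarEq : ∀ z, Var z = (M2 z * D z - N z ^ 2) / D z ^ 2 := by
    intro z
    have hDz := (hDpos z).ne'
    rw [hVar, hm1, hm2]
    show M2 z / D z - (N z / D z) ^ 2 = _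
    field_simp
  -- derivative of η
  have hetaD : ∀ z, HasDerivAt η (s * Var z) z := by
    intro z
    have hfun : η = fun z => N z / D z := funext fun z => hη z
    rw [hfun]
    have h := (hN' z).div (hD' z) (hDpos z).ne'
    refine h.congr_deriv ?_
    rw [hVarEq z]
    have hDz := (hDpos z).ne'
    field_simp
    ring
  -- variance bounds
  have hVnn : ∀ z, 0 ≤ Var z := by
    intro z
    have hDz := hDpos z
    set a := N z / D z with ha
    have hexp : (fun x => (x - a) ^ 2 * w z x) = fun x =>
        x ^ 2 * w z x + ((-2 * a) * (x * w z x) + a ^ 2 * w z x) := by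
      funext x; ring
    have hint : Integrable (fun x => (x - a) ^ 2 * w z x) P₀ := by
      rw [hexp]
      exact (hintM2 z).add (((hintN z).const_mul _).add ((hintD z).const_mul _))
    have hnn : 0 ≤ ∫ x, (x - a) ^ 2 * w z x ∂P₀ :=
      integral_nonneg fun x => mul_nonneg (sq_nonneg _) (w_pos s z x).le
    have heq : ∫ x, (x - a) ^ 2 * w z x ∂P₀ = M2 z - 2 * a * N z + a ^ 2 * D z := by
      have i1 : Integrable (fun x => (-2 * a) * (x * w z x)) P₀ := (hintN z).const_mul _
      have i2 : Integrable (fun x => a ^ 2 * w z x) P₀ := (hintD z).const_mul _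
      have i3 : Integrable (fun x => (-2 * a) * (x * w z x) + a ^ 2 * w z x) P₀ := i1.add i2
      rw [hexp, integral_add (hintM2 z) i3, integral_add i1 i2,
        integral_const_mul, integral_const_mul]
      ring
    rw [heq] at hnn
    rw [hVarEq z]
    apply div_nonneg _ (sq_nonneg _)
    have : a = N z / D z := ha
    have h2 : M2 z - 2 * (N z / D z) * N z + (N z / D z) ^ 2 * D z
        = (M2 z * D z - N z ^ 2) / D z := by
      field_simp
      ring
    rw [this, h2] at hnn
    have := (div_nonneg_iff.1 hnn)
    rcases this with ⟨h, _⟩ | ⟨h, h'⟩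
    · exact h
    · linarith [hDpos z]
  have hVle : ∀ z, Var z ≤ L ^ 2 := by
    intro z
    have hm2le : m2 z ≤ L ^ 2 := by
      rw [hm2]
      have hmono : ∀ᵐ x ∂P₀, x ^ 2 * w z x ≤ L ^ 2 * w z x := by
        filter_upwards [hsupp] with x hx
        have hxL : |x| ≤ L := abs_le.2 ⟨hx.1, hx.2⟩
        have : x ^ 2 ≤ L ^ 2 := by nlinarith [abs_nonneg x, le_abs_self x, neg_abs_le x]
        exact mul_le_mul_of_nonneg_right this (w_pos s z x).le
      have i1 : Integrable (fun x => L ^ 2 * w z x) P₀ := (hintD z).const_mul _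
      have hle : M2 z ≤ L ^ 2 * D z :=
        le_of_le_of_eq (integral_mono_ae (hintM2 z) i1 hmono) (integral_const_mul _ _)
      rw [div_le_iff₀ (hDpos z)]
      calc M2 z ≤ L ^ 2 * D z := hle
        _ = L ^ 2 * D z := rfl
    calc Var z = m2 z - m1 z ^ 2 := hVar z
      _ ≤ m2 z := by nlinarith [sq_nonneg (m1 z)]
      _ ≤ L ^ 2 := hm2le
  have hbounds : ∀ z, 0 ≤ s * Var z ∧ s * Var z ≤ s * L ^ 2 := fun z =>
    ⟨mul_nonneg hs.le (hVnn z), mul_le_mul_of_nonneg_left (hVle z) hs.le⟩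
  refine ⟨hetaD, hbounds, ?_⟩
  apply lipschitzWith_of_nnnorm_deriv_le (fun z => (hetaD z).differentiableAt)
  intro z
  rw [(hetaD z).deriv]
  rw [← NNReal.coe_le_coe, coe_nnnorm, Real.norm_eq_abs,
    abs_of_nonneg (hbounds z).1, Real.coe_toNNReal _ (by positivity)]
  exact (hbounds z).2
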